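/- Let δ be a dissimilarity map on {1,…,m} satisfying the Kalmanson conditions with respect to the identity circular ordering, and write δ_{xy}(z) = δ(x,z) + δ(y,z) − δ(x,y) for the Farris transform. Then for all indices i < x < y < z < j < t in {1,…,m}: δ_{xy}(z) + δ_{xz}(y) + δ_{yz}(x) + δ_{xy}(t) + δ_{xz}(t) + δ_{yz}(t) ≥ 3·δ_{ij}(t) + δ_{ij}(x) + δ_{ij}(y) + δ_{ij}(z). -/
import Mathlib


/-- A dissimilarity map on `{1,…,m}` (modeled as `Fin m`): symmetric,
nonnegative, and zero on the diagonal. -/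
def IsDissimilarity {m : ℕ} (δ : Fin m → Fin m → ℝ) : Prop :=
  (∀ i j, δ i j = δ j i) ∧ (∀ i j, 0 ≤ δ i j) ∧ (∀ i, δ i i = 0)

/-- The Kalmanson conditions with respect to the identity circular ordering. -/
def Kalmanson {m : ℕ} (δ : Fin m → Fin m → ℝ) : Prop :=
  ∀ i j k l : Fin m, i < j → j < k → k < l →
    δ i j + δ k l ≤ δ i k + δ j l ∧ δ i l + δ j k ≤ δ i k + δ j l

/-- The Farris transform `δ_{xy}(z) = δ(x,z) + δ(y,z) − δ(x,y)`. -/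
def farris {m : ℕ} (δ : Fin m → Fin m → ℝ) (x y z : Fin m) : ℝ :=
  δ x z + δ y z - δ x y

/-- if `δ` is a Kalmanson dissimilarity map on `{1,…,m}`, then
for all indices `i < x < y < z < j < t`:
`δ_{xy}(z) + δ_{xz}(y) + δ_{yz}(x) + δ_{xy}(t) + δ_{xz}(t) + δ_{yz}(t)
  ≥ 3·δ_{ij}(t) + δ_{ij}(x) + δ_{ij}(y) + δ_{ij}(z)`. -/
theorem farris_three_times {m : ℕ} (δ : Fin m → Fin m → ℝ)
    (hdis : IsDissimilarity δ) (hK : Kalmanson δ)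
    (i x y z j t : Fin m)
    (h1 : i < x) (h2 : x < y) (h3 : y < z) (h4 : z < j) (h5 : j < t) :
    farris δ x y z + farris δ x z y + farris δ y z x +
      farris δ x y t + farris δ x z t + farris δ y z t ≥
    3 * farris δ i j t + farris δ i j x + farris δ i j y + farris δ i j z := by
  obtain ⟨hsym, -, -⟩ := hdis
  obtain ⟨hx1, hx2⟩ := hK i x j t h1 (h2.trans (h3.trans h4)) h5
  obtain ⟨hy1, hy2⟩ := hK i y j t (h1.trans h2) (h3.trans h4) h5
  obtain ⟨hz1, hz2⟩ := hK i z j t (h1.trans (h2.trans h3)) h4 h5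
  simp only [farris]
  linarith [hsym x y, hsym x z, hsym y z, hsym x t, hsym y t, hsym z t, hsym x j, hsym y j, hsym z j]
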